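/- If f(x) = (⟨a, x⟩ + b)^+ for fixed a ∈ ℝ^d and b ∈ ℝ (where z^+ := max(z,0)), then for every x ∈ ℝ^d one has g^A(x) = (⟨a, x⟩ + b + (√A/2)·⟨aσ, a⟩)^+. -/

import Mathlib

open MeasureTheory ProbabilityTheory Matrix Filter

noncomputable section

/-- Euclidean inner product on row vectors in `ℝ^d`. -/
def euclInner {d : ℕ} (x y : Fin d → ℝ) : ℝ := ∑ i, x i * y i

/-- Euclidean norm on row vectors in `ℝ^d`. -/
def euclNorm {d : ℕ} (x : Fin d → ℝ) : ℝ := Real.sqrt (∑ i, (x i) ^ 2)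

/-- `g^A(x) := sup_y [ f(x+y) − ⟨yσ⁻¹, y⟩/(2√A) ]`. -/
def gA {d : ℕ} (A : ℝ) (σ : Matrix (Fin d) (Fin d) ℝ) (f : (Fin d → ℝ) → ℝ)
    (x : Fin d → ℝ) : ℝ :=
  sSup {r | ∃ y : Fin d → ℝ, r = f (x + y) - euclInner (y ᵥ* σ⁻¹) y / (2 * Real.sqrt A)}

lemma symm_dot {d : ℕ} (M : Matrix (Fin d) (Fin d) ℝ) (hM : Mᵀ = M) (u v : Fin d → ℝ) :
    (u ᵥ* M) ⬝ᵥ v = u ⬝ᵥ (v ᵥ* M) := by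
  rw [← dotProduct_mulVec, ← mulVec_transpose, hM]

lemma expand_lemma {d : ℕ} (σ : Matrix (Fin d) (Fin d) ℝ) (hσ : σ.PosDef) (t : ℝ)
    (a z : Fin d → ℝ) :
    ((z + t • (a ᵥ* σ)) ᵥ* σ⁻¹) ⬝ᵥ (z + t • (a ᵥ* σ))
      = (z ᵥ* σ⁻¹) ⬝ᵥ z + 2 * t * (a ⬝ᵥ z) + t ^ 2 * ((a ᵥ* σ) ⬝ᵥ a) := by
  have hsymm : σ⁻¹ᵀ = σ⁻¹ := by
    have := hσ.inv.1
    rwa [IsHermitian, conjTranspose_eq_transpose_of_trivial] at this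
  have hw : (a ᵥ* σ) ᵥ* σ⁻¹ = a := by
    rw [vecMul_vecMul, Matrix.mul_nonsing_inv _ hσ.det_pos.ne'.isUnit, vecMul_one]
  have hcross : (z ᵥ* σ⁻¹) ⬝ᵥ (a ᵥ* σ) = a ⬝ᵥ z := by
    rw [symm_dot _ hsymm, hw, dotProduct_comm]
  have hq : (a ᵥ* σ) ⬝ᵥ a = a ⬝ᵥ (a ᵥ* σ) := by
    rw [dotProduct_comm]
  rw [add_vecMul, smul_vecMul, hw, add_dotProduct, dotProduct_add, dotProduct_add,
    smul_dotProduct, smul_dotProduct, dotProduct_smul, dotProduct_smul, hcross, hq]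
  simp only [smul_eq_mul]; ring

lemma inv_nonneg_quad {d : ℕ} (σ : Matrix (Fin d) (Fin d) ℝ) (hσ : σ.PosDef)
    (z : Fin d → ℝ) : 0 ≤ (z ᵥ* σ⁻¹) ⬝ᵥ z := by
  have := hσ.inv.posSemidef.dotProduct_mulVec_nonneg z
  rwa [star_trivial, dotProduct_mulVec] at this

/-- If `f(x) = (⟨a,x⟩ + b)⁺`, then `g^A(x) = (⟨a,x⟩ + b + (√A/2)·⟨aσ,a⟩)⁺`. -/
theorem stmt4 {d : ℕ} (hd : 1 ≤ d) (σ : Matrix (Fin d) (Fin d) ℝ) (hσ : σ.PosDef)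
    (A : ℝ) (hA : 0 < A) (a : Fin d → ℝ) (b : ℝ) :
    ∀ x : Fin d → ℝ,
      gA A σ (fun z => max (euclInner a z + b) 0) x
        = max (euclInner a x + b + (Real.sqrt A / 2) * euclInner (a ᵥ* σ) a) 0 := by
  intro x
  have he : ∀ u v : Fin d → ℝ, euclInner u v = u ⬝ᵥ v := fun _ _ => rfl
  set t : ℝ := Real.sqrt A with ht_def
  have ht : 0 < t := Real.sqrt_pos.mpr hA
  set Q : ℝ := (a ᵥ* σ) ⬝ᵥ a with hQ_def
  have hQ : 0 ≤ Q := by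
    have := hσ.posSemidef.dotProduct_mulVec_nonneg a
    rwa [star_trivial, dotProduct_mulVec] at this
  set c : ℝ := a ⬝ᵥ x + b with hc_def
  set m : ℝ := max (c + t / 2 * Q) 0 with hm_def
  -- the key inequality
  have key : ∀ y : Fin d → ℝ,
      a ⬝ᵥ y - (y ᵥ* σ⁻¹) ⬝ᵥ y / (2 * t) ≤ t / 2 * Q := by
    intro y
    have hy : y = (y - t • (a ᵥ* σ)) + t • (a ᵥ* σ) := by abel
    set z : Fin d → ℝ := y - t • (a ᵥ* σ) with hz_def
    have hz : 0 ≤ (z ᵥ* σ⁻¹) ⬝ᵥ z := inv_nonneg_quad σ hσ z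
    rw [hy, expand_lemma σ hσ t a z, dotProduct_add, dotProduct_smul]
    have haw : a ⬝ᵥ (a ᵥ* σ) = Q := by rw [dotProduct_comm, hQ_def]
    rw [haw]
    have h2t : (2 * t) ≠ 0 := by positivity
    have : a ⬝ᵥ z + t • Q -
        ((z ᵥ* σ⁻¹) ⬝ᵥ z + 2 * t * (a ⬝ᵥ z) + t ^ 2 * Q) / (2 * t)
        = t / 2 * Q - (z ᵥ* σ⁻¹) ⬝ᵥ z / (2 * t) := by
      field_simp
      ring
    rw [this]
    have : 0 ≤ (z ᵥ* σ⁻¹) ⬝ᵥ z / (2 * t) := by positivity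
    linarith
  -- value of element at y
  have hval : ∀ y : Fin d → ℝ,
      (fun z => max (euclInner a z + b) 0) (x + y)
        - euclInner (y ᵥ* σ⁻¹) y / (2 * Real.sqrt A)
      = max (c + a ⬝ᵥ y) 0 - (y ᵥ* σ⁻¹) ⬝ᵥ y / (2 * t) := by
    intro y
    simp only [he, dotProduct_add, hc_def, ← ht_def]
    ring_nf
  have hgreatest : IsGreatest
      {r | ∃ y : Fin d → ℝ, r = (fun z => max (euclInner a z + b) 0) (x + y)
          - euclInner (y ᵥ* σ⁻¹) y / (2 * Real.sqrt A)} m := by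
    constructor
    · -- membership
      rcases le_or_gt (c + t / 2 * Q) 0 with hle | hlt
      · refine ⟨0, ?_⟩
        rw [hval 0]
        have : m = 0 := max_eq_right hle
        rw [this]
        have hc0 : c ≤ 0 := by nlinarith
        simp [max_eq_right hc0]
      · refine ⟨t • (a ᵥ* σ), ?_⟩
        rw [hval (t • (a ᵥ* σ))]
        have hexp := expand_lemma σ hσ t a 0
        simp only [zero_add, zero_vecMul, zero_dotProduct, dotProduct_zero] at hexp
        rw [hexp]
        have haw : a ⬝ᵥ (t • (a ᵥ* σ)) = t * Q := by
          rw [dotProduct_smul, smul_eq_mul, dotProduct_comm, hQ_def]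
        rw [haw]
        have hpos : (0:ℝ) ≤ c + t * Q := by nlinarith
        rw [max_eq_left hpos, hm_def, max_eq_left hlt.le]
        have h2t : (2 * t) ≠ 0 := by positivity
        field_simp
        ring
    · -- upper bound
      rintro r ⟨y, rfl⟩
      rw [hval y]
      have hz : 0 ≤ (y ᵥ* σ⁻¹) ⬝ᵥ y := inv_nonneg_quad σ hσ y
      have hz' : 0 ≤ (y ᵥ* σ⁻¹) ⬝ᵥ y / (2 * t) := by positivity
      rcases le_or_gt (c + a ⬝ᵥ y) 0 with hle | hlt
      · rw [max_eq_right hle]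
        have : (0:ℝ) ≤ m := le_max_right _ _
        linarith
      · rw [max_eq_left hlt.le]
        have := key y
        have : c + a ⬝ᵥ y - (y ᵥ* σ⁻¹) ⬝ᵥ y / (2 * t) ≤ c + t / 2 * Q := by linarith
        have hm : c + t / 2 * Q ≤ m := le_max_left _ _
        linarith
  rw [gA, hgreatest.csSup_eq]
  simp only [hm_def, hc_def, he, hQ_def, ← ht_def]
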